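/- For any proper function f : X → ℝ ∪ {+∞} and any u ∈ X, the σ-generalized asymptotic function satisfies f^{σg}(u) = inf{ liminf_{n→∞} f(t_n d_n) : t_n → +∞, d_n → u in σ }. -/

import Mathlib

open Filter Topology Set

variable {X : Type*} [NormedAddCommGroup X] [NormedSpace ℝ X]

/-- The σ-asymptotic cone of a set `K`. -/
def asympCone (σ : TopologicalSpace X) (K : Set X) : Set X :=
  {u | ∃ t : ℕ → ℝ, ∃ x : ℕ → X, Tendsto t atTop atTop ∧ (∀ k, x k ∈ K) ∧
      Tendsto (fun k => (t k)⁻¹ • x k) atTop (@nhds X σ u)}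

/-- The σ-generalized asymptotic function `f^{σg}`. -/
noncomputable def genAsymp (σ : TopologicalSpace X) (f : X → EReal) (u : X) : EReal :=
  sInf ((fun lam : ℝ => (lam : EReal)) ''
    {lam : ℝ | u ∈ asympCone σ {x | f x ≤ (lam : EReal)}})

/-- The σ-asymptotic function `f^∞_σ`. -/
noncomputable def asympFun (σ : TopologicalSpace X) (f : X → EReal) (u : X) : EReal :=
  sInf {l : EReal | ∃ t : ℕ → ℝ, ∃ d : ℕ → X, Tendsto t atTop atTop ∧
      Tendsto d atTop (@nhds X σ u) ∧
      l = liminf (fun n => f (t n • d n) / ((t n : ℝ) : EReal)) atTop}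

/-- The truncated set `K_n = {x ∈ K : ‖x‖ ≤ n}`. -/
def Kn (K : Set X) (n : ℕ) : Set X := {x ∈ K | ‖x‖ ≤ (n : ℝ)}

/-- The solution set `S(ψ, A)` of the equilibrium problem on `A`. -/
def solSet (ψ : X → X → ℝ) (A : Set X) : Set X := {x ∈ A | ∀ y ∈ A, 0 ≤ ψ x y}

/-- `x ↦ -ψ(x,y)` extended by `+∞` outside `K`. -/
noncomputable def extNeg (K : Set X) (ψ : X → X → ℝ) (y : X) (x : X) : EReal :=
  haveI := Classical.propDecidable (x ∈ K)
  if x ∈ K then ((-ψ x y : ℝ) : EReal) else ⊤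

/-- Condition `(K_σ)`. -/
def CondK (σ : TopologicalSpace X) (K : Set X) (ψ : X → X → ℝ) : Prop :=
  ∀ x : ℕ → X, (∀ n, x n ∈ solSet ψ (Kn K n)) → (∀ C : ℝ, ∃ n, C < ‖x n‖) →
    ∃ φ : ℕ → ℕ, StrictMono φ ∧ ∃ w : ℕ → X, (∀ k, w k ∈ K) ∧
      ∃ d ∈ asympCone σ K, d ≠ 0 ∧
        (∀ k, ∀ y ∈ Kn K (φ k), ψ (x (φ k)) y ≤ ψ (w k) y) ∧
        Tendsto (fun k => ‖w k‖⁻¹ • w k) atTop (@nhds X σ d)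

theorem genAsymp_eq_liminf_formula (σ : TopologicalSpace X)
    (hcoarser : (inferInstance : TopologicalSpace X) ≤ σ) (hT2 : @T2Space X σ)
    (f : X → EReal) (hproper : ∃ x, f x ≠ ⊤) (hreal : ∀ x, f x ≠ ⊥) (u : X) :
    genAsymp σ f u =
      sInf {l : EReal | ∃ t : ℕ → ℝ, ∃ d : ℕ → X, Tendsto t atTop atTop ∧
        Tendsto d atTop (@nhds X σ u) ∧
        l = liminf (fun n => f (t n • d n)) atTop} := by
  apply le_antisymm
  · -- genAsymp ≤ RHS
    apply le_sInf
    rintro l ⟨t, d, ht, hd, rfl⟩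
    rw [← EReal.le_of_forall_lt_iff_le]
    intro lam hlam
    have hfreq : ∃ᶠ n in atTop, f (t n • d n) < (lam : EReal) :=
      Filter.frequently_lt_of_liminf_lt (by isBoundedDefault) hlam
    have hev : ∀ᶠ n in atTop, 1 ≤ t n := ht.eventually_ge_atTop 1
    obtain ⟨φ, hφ, hP⟩ := Filter.extraction_of_frequently_atTop
      (hfreq.and_eventually hev)
    refine sInf_le ⟨lam, ?_, rfl⟩
    refine ⟨t ∘ φ, fun k => t (φ k) • d (φ k), ht.comp hφ.tendsto_atTop, ?_, ?_⟩
    · exact fun k => le_of_lt (hP k).1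
    · have : ∀ k, (t (φ k))⁻¹ • (t (φ k) • d (φ k)) = d (φ k) := fun k =>
        inv_smul_smul₀ (by linarith [(hP k).2]) _
      simpa only [Function.comp_def, this] using hd.comp hφ.tendsto_atTop
  · -- RHS ≤ genAsymp
    apply le_sInf
    rintro l ⟨lam, hlam, rfl⟩
    obtain ⟨t, x, ht, hx, hconv⟩ := hlam
    refine sInf_le_of_le ⟨t, fun k => (t k)⁻¹ • x k, ht, hconv, rfl⟩ ?_
    have hev : ∀ᶠ k in atTop, f (t k • (t k)⁻¹ • x k) ≤ (lam : EReal) := by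
      filter_upwards [ht.eventually_ge_atTop 1] with k hk
      rw [smul_inv_smul₀ (by linarith)]
      exact hx k
    exact Filter.liminf_le_of_frequently_le hev.frequently
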